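/- In the SAT reduction grammar, the category [c_i] / [v_1=b_1] ⋯ / [v_n=b_n] is derivable from the category [c_{i-1}] / [v_1=b_1] ⋯ / [v_n=b_n] together with the lexicon entry for c_i if and only if the truth assignment (b_1,…,b_n) satisfies clause c_i. -/

import Mathlib

/-- Categories of VW-CCG over atomic categories coded by natural numbers.
`slash d X Y` is `X /ᵈ Y` where `d = true` is a forward slash `/` and
`d = false` is a backward slash `\`. -/
inductive Cat : Type where
  | atom : ℕ → Cat
  | slash : Bool → Cat → Cat → Cat
deriving DecidableEq

namespace Cat

/-- The target (innermost atomic category). -/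
def target : Cat → ℕ
  | atom a => a
  | slash _ X _ => X.target

/-- The argument stack of a category, bottom of the stack first. -/
def args : Cat → List (Bool × Cat)
  | atom _ => []
  | slash d X Y => X.args ++ [(d, Y)]

/-- The number of arguments of a category. -/
def numArgs (X : Cat) : ℕ := X.args.length

/-- The size (number of symbols) of a category. -/
def size : Cat → ℕ
  | atom _ => 1
  | slash _ X Y => X.size + Y.size + 1

/-- `ArgOccurs p X` holds if the slash–category pair `p` occurs as an
argument somewhere inside the category `X`. -/
def ArgOccurs (p : Bool × Cat) : Cat → Prop
  | atom _ => False
  | slash d X Y => (d, Y) = p ∨ ArgOccurs p X ∨ ArgOccurs p Y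

end Cat

/-- Build `A /₁ X₁ ⋯ /ₘ Xₘ` from a target and an argument list. -/
def Cat.mk' (t : ℕ) (as : List (Bool × Cat)) : Cat :=
  as.foldl (fun c p => Cat.slash p.1 c p.2) (Cat.atom t)

/-- Push additional arguments on the stack of a category. -/
def appendArgs (X : Cat) (zs : List (Bool × Cat)) : Cat :=
  zs.foldl (fun c p => Cat.slash p.1 c p.2) X

/-- A VW-CCG combinatory rule: a (forward or backward) combinatory schema of
degree `zRestr.length`, optionally restricting the target of the variable `X`,
the category `Y`, and the slashes and categories of the arguments
`/₁ Z₁ ⋯ /_d Z_d` of the secondary input. -/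
structure Rule where
  fwd : Bool
  tRestr : Option ℕ
  yRestr : Option Cat
  zRestr : List (Bool × Option Cat)

/-- The degree of a rule. -/
def Rule.degree (r : Rule) : ℕ := r.zRestr.length

/-- `r.Inst L R O` holds if `L R ⇛ O` is a ground instance of the rule `r`:
forward: `X/Y  Y/₁Z₁⋯/_dZ_d ⇛ X/₁Z₁⋯/_dZ_d`;
backward: `Y/₁Z₁⋯/_dZ_d  X\Y ⇛ X/₁Z₁⋯/_dZ_d`, respecting the restrictions. -/
def Rule.Inst (r : Rule) (L R O : Cat) : Prop :=
  ∃ (X Y : Cat) (zs : List (Bool × Cat)),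
    (∀ t, r.tRestr = some t → X.target = t) ∧
    (∀ Y', r.yRestr = some Y' → Y = Y') ∧
    List.Forall₂ (fun (p : Bool × Option Cat) (z : Bool × Cat) =>
      z.1 = p.1 ∧ ∀ Z, p.2 = some Z → z.2 = Z) r.zRestr zs ∧
    O = appendArgs X zs ∧
    (if r.fwd then L = Cat.slash true X Y ∧ R = appendArgs Y zs
     else R = Cat.slash false X Y ∧ L = appendArgs Y zs)

/-- A VW-CCG grammar: a finite lexicon assigning categories to vocabulary
symbols (coded by naturals) or to the empty string (`none`), a finite set of
combinatory rules, and a distinguished atomic category. -/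
structure Grammar where
  lex : List (Option ℕ × Cat)
  rules : List Rule
  start : ℕ

/-- A grammar is ε-free if no lexicon entry is for the empty string. -/
def Grammar.EpsFree (G : Grammar) : Prop := ∀ e ∈ G.lex, e.1 ≠ none

/-- Derivation trees: leaves carry lexicon entries (`none` = empty string),
internal nodes carry categories and have exactly two children. -/
inductive DTree where
  | leaf : Option ℕ → Cat → DTree
  | node : Cat → DTree → DTree → DTree

namespace DTree

/-- The category at the root. -/
def top : DTree → Cat
  | leaf _ X => X
  | node X _ _ => X

/-- The yield: left-to-right concatenation of the symbols at the leaves. -/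
def yield : DTree → List ℕ
  | leaf none _ => []
  | leaf (some σ) _ => [σ]
  | node _ l r => l.yield ++ r.yield

/-- The total number of nodes. -/
def nodes : DTree → ℕ
  | leaf _ _ => 1
  | node _ l r => l.nodes + r.nodes + 1

/-- `τ.Valid G`: `τ` is a derivation tree of the grammar `G`. -/
def Valid (G : Grammar) : DTree → Prop
  | leaf σ X => (σ, X) ∈ G.lex
  | node X l r => Valid G l ∧ Valid G r ∧ ∃ rl ∈ G.rules, rl.Inst l.top r.top X

/-- `τ.CatAt C`: the category `C` labels some node of `τ`. -/
def CatAt : DTree → Cat → Prop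
  | leaf _ X, C => C = X
  | node X l r, C => C = X ∨ l.CatAt C ∨ r.CatAt C

end DTree

/-- The language generated by a grammar. -/
def Grammar.Lang (G : Grammar) : Set (List ℕ) :=
  { w | ∃ τ : DTree, τ.Valid G ∧ τ.top = Cat.atom G.start ∧ τ.yield = w }

/-- CNF formulas: clauses are lists of literals (sign, variable index). -/
abbrev CNF := List (List (Bool × ℕ))

/-- Satisfiability of a CNF formula. -/
def CNF.Satisfiable (φ : CNF) : Prop :=
  ∃ σ : ℕ → Bool, ∀ c ∈ φ, ∃ l ∈ c, σ l.2 = l.1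

/-! Atomic categories of the SAT-reduction grammar (`m` = number of
clauses): `aCent` is `[¢]`, `aC i` is `[c_i]`, `aV m j b` is `[v_j = b]`. -/

def aCent : ℕ := 0
def aC (i : ℕ) : ℕ := 1 + i
def aV (m j : ℕ) (b : Bool) : ℕ := m + 2 + 2 * j + cond b 1 0

/-! Vocabulary symbols: `sC i` is `c_i`, `sV m j` is `v_j`, `sD m n j` is
`d_j`. -/

def sC (i : ℕ) : ℕ := i
def sV (m j : ℕ) : ℕ := m + j
def sD (m n j : ℕ) : ℕ := m + n + 1 + j

/-- The secondary-input restriction `𝟙_j` / `𝟘_j`: `n` forward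
slash–variable pairs with the `j`-th (1-based) position fixed to
`[v_j = b]`. -/
def oneHot (n m j : ℕ) (b : Bool) : List (Bool × Option Cat) :=
  (List.range n).map fun k =>
    (true, if k = j - 1 then some (Cat.atom (aV m j b)) else none)

/-- The ε-free VW-CCG grammar constructed from a CNF formula `φ` with `n`
variables in the NP-hardness reduction. -/
def satGrammar (n : ℕ) (φ : CNF) : Grammar :=
  let m := φ.length
  { lex :=
      -- c_0 := [c_0]/[¢]
      (some (sC 0), Cat.slash true (Cat.atom (aC 0)) (Cat.atom aCent)) ::
      -- c_i := [c_i]/[c_{i−1}] for 1 ≤ i ≤ m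
      (((List.range m).map fun i =>
          (some (sC (i + 1)), Cat.slash true (Cat.atom (aC (i + 1))) (Cat.atom (aC i)))) ++
       -- v_j := [¢]/[v_j=b]/[¢] for 1 ≤ j ≤ n, b ∈ {0,1}
       ((List.range n).flatMap fun j =>
          [true, false].map fun b =>
            (some (sV m (j + 1)),
              Cat.mk' aCent [(true, Cat.atom (aV m (j + 1) b)), (true, Cat.atom aCent)])) ++
       -- v_{n+1} := [¢]
       [(some (sV m (n + 1)), Cat.atom aCent)] ++
       -- d_j := [v_j=b]
       ((List.range n).flatMap fun j =>
          [true, false].map fun b => (some (sD m n (j + 1)), Cat.atom (aV m (j + 1) b))))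
    rules :=
      -- guessing: X/[¢]  [¢]/[v_j=b]/[¢] ⇒ X/[v_j=b]/[¢]
      ((List.range n).flatMap fun j =>
        [true, false].map fun b =>
          ⟨true, none, some (Cat.atom aCent),
            [(true, some (Cat.atom (aV m (j + 1) b))), (true, some (Cat.atom aCent))]⟩) ++
      -- X/[¢]  [¢] ⇒ X
      [⟨true, none, some (Cat.atom aCent), []⟩] ++
      -- clause checking: X/[c_{i−1}]  [c_{i−1}] 𝟙_j ⇒ X 𝟙_j (v_j in c_i), etc.
      ((List.range m).flatMap fun i =>
        (φ.getD i []).map fun l =>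
          ⟨true, none, some (Cat.atom (aC i)), oneHot n m l.2 l.1⟩) ++
      -- X/[v_j=b]  [v_j=b] ⇒ X
      ((List.range n).flatMap fun j =>
        [true, false].map fun b => ⟨true, none, some (Cat.atom (aV m (j + 1) b)), []⟩)
    start := aC m }

/-- The input string `w = c_m ⋯ c_1 c_0 v_1 ⋯ v_n v_{n+1} d_n ⋯ d_1` of the
reduction. -/
def wSAT (m n : ℕ) : List ℕ :=
  ((List.range (m + 1)).reverse.map sC) ++
  ((List.range (n + 1)).map fun j => sV m (j + 1)) ++
  ((List.range n).reverse.map fun j => sD m n (j + 1))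

/-- Part 2 of the SAT reduction: the category
`[c_i] / [v_1=b_1] ⋯ / [v_n=b_n]` is derivable (by a single rule of the
grammar) from `[c_{i−1}] / [v_1=b_1] ⋯ / [v_n=b_n]` together with the
lexicon category `[c_i]/[c_{i−1}]` of `c_i` if and only if the truth
assignment `(b_1, …, b_n)` satisfies clause `c_i`. -/
theorem clause_check_correct (n : ℕ) (φ : CNF) (i : ℕ) (b : ℕ → Bool)
    (h1 : 1 ≤ i) (h2 : i ≤ φ.length)
    (hvars : ∀ c ∈ φ, ∀ l ∈ c, 1 ≤ l.2 ∧ l.2 ≤ n) :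
    (∃ r ∈ (satGrammar n φ).rules,
        r.Inst (Cat.slash true (Cat.atom (aC i)) (Cat.atom (aC (i - 1))))
          (Cat.mk' (aC (i - 1)) ((List.range n).map fun j =>
            (true, Cat.atom (aV φ.length (j + 1) (b (j + 1))))))
          (Cat.mk' (aC i) ((List.range n).map fun j =>
            (true, Cat.atom (aV φ.length (j + 1) (b (j + 1))))))) ↔
      ∃ l ∈ φ.getD (i - 1) [], b l.2 = l.1 := by
  classical
  set m := φ.length with hm
  set L0 : List (Bool × Cat) := (List.range n).map fun j =>
    (true, Cat.atom (aV m (j + 1) (b (j + 1)))) with hL0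
  have him : i - 1 < m := by omega
  have hclause : φ.getD (i - 1) [] ∈ φ := by
    rw [List.getD_eq_getElem φ [] him]
    exact List.getElem_mem him
  -- key: Forall₂ condition for the clause rule of literal l
  have hFA : ∀ l : Bool × ℕ, 1 ≤ l.2 → l.2 ≤ n →
      (List.Forall₂ (fun (p : Bool × Option Cat) (z : Bool × Cat) =>
        z.1 = p.1 ∧ ∀ Z, p.2 = some Z → z.2 = Z) (oneHot n m l.2 l.1) L0 ↔
        b l.2 = l.1) := by
    rintro ⟨lb, j⟩ hj1 hj2
    simp only [oneHot, hL0, List.forall₂_map_left_iff, List.forall₂_map_right_iff,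
      List.forall₂_same]
    constructor
    · intro h
      have := (h (j - 1) (by simp; omega)).2 (Cat.atom (aV m j lb)) (by simp)
      have hj : j - 1 + 1 = j := by omega
      rw [hj] at this
      have : aV m j (b j) = aV m j lb := by
        have := congrArg Cat.target this
        simpa [Cat.target] using this
      simp only [aV] at this
      cases hb : b j <;> cases hlb : lb <;> simp [hb, hlb] at this ⊢ <;> omega
    · intro hbj k _
      refine ⟨by simp, ?_⟩
      intro Z hZ
      by_cases hk : k = j - 1
      · subst hk
        rw [if_pos rfl] at hZ
        cases hZ
        rw [show j - 1 + 1 = j from by omega, hbj]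
      · simp [hk] at hZ
  constructor
  · rintro ⟨r, hr, X, Y, zs, htr, hyr, hfa, hO, hLR⟩
    simp only [satGrammar, List.mem_append, List.mem_flatMap, List.mem_map,
      List.mem_cons, List.mem_singleton, List.mem_range] at hr
    rcases hr with (((⟨j, hj, bb, hbb, rfl⟩ | rfl | hemp) | ⟨i', hi', l, hl, rfl⟩) |
      ⟨j, hj, bb, hbb, rfl⟩)
    rotate_left 2
    · exact absurd hemp List.not_mem_nil
    rotate_right 2
    · -- guessing rule: Y restricted to [¢], impossible
      have hLR' : Cat.slash true (Cat.atom (aC i)) (Cat.atom (aC (i - 1))) =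
          Cat.slash true X Y ∧ Cat.mk' (aC (i - 1)) L0 = appendArgs Y zs := hLR
      obtain ⟨rfl, rfl⟩ : X = Cat.atom (aC i) ∧ Y = Cat.atom (aC (i - 1)) := by
        injection hLR'.1 with _ h1 h2; exact ⟨h1.symm, h2.symm⟩
      have := hyr _ rfl
      simp only [Cat.atom.injEq, aC, aCent] at this
      omega
    · have hLR' : Cat.slash true (Cat.atom (aC i)) (Cat.atom (aC (i - 1))) =
          Cat.slash true X Y ∧ Cat.mk' (aC (i - 1)) L0 = appendArgs Y zs := hLR
      obtain ⟨rfl, rfl⟩ : X = Cat.atom (aC i) ∧ Y = Cat.atom (aC (i - 1)) := by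
        injection hLR'.1 with _ h1 h2; exact ⟨h1.symm, h2.symm⟩
      have := hyr _ rfl
      simp only [Cat.atom.injEq, aC, aCent] at this
      omega
    · -- clause-checking rule
      have hLR' : Cat.slash true (Cat.atom (aC i)) (Cat.atom (aC (i - 1))) =
          Cat.slash true X Y ∧ Cat.mk' (aC (i - 1)) L0 = appendArgs Y zs := hLR
      obtain ⟨rfl, rfl⟩ : X = Cat.atom (aC i) ∧ Y = Cat.atom (aC (i - 1)) := by
        injection hLR'.1 with _ h1 h2; exact ⟨h1.symm, h2.symm⟩
      have hii : i' = i - 1 := by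
        have := hyr _ rfl
        simp only [Cat.atom.injEq, aC] at this
        omega
      subst hii
      have hzs : zs = L0 := by
        have harg : ∀ (ws : List (Bool × Cat)) (C : Cat),
            (appendArgs C ws).args = C.args ++ ws := by
          intro ws
          induction ws with
          | nil => intro C; simp [appendArgs]
          | cons p ws ih =>
            intro C
            have h0 : appendArgs C (p :: ws) = appendArgs (Cat.slash p.1 C p.2) ws := rfl
            rw [h0, ih]
            simp [Cat.args]
        have h1 : (appendArgs (Cat.atom (aC (i - 1))) L0).args =
            (appendArgs (Cat.atom (aC (i - 1))) zs).args := by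
          rw [← hLR'.2]; rfl
        rw [harg, harg] at h1
        simpa [Cat.args] using h1.symm
      subst hzs
      obtain ⟨hj1, hj2⟩ := hvars _ hclause l hl
      exact ⟨l, hl, (hFA l hj1 hj2).1 hfa⟩
    · -- variable-elimination rule: Y restricted to [v_j=b], impossible
      have hLR' : Cat.slash true (Cat.atom (aC i)) (Cat.atom (aC (i - 1))) =
          Cat.slash true X Y ∧ Cat.mk' (aC (i - 1)) L0 = appendArgs Y zs := hLR
      obtain ⟨rfl, rfl⟩ : X = Cat.atom (aC i) ∧ Y = Cat.atom (aC (i - 1)) := by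
        injection hLR'.1 with _ h1 h2; exact ⟨h1.symm, h2.symm⟩
      have := hyr _ rfl
      simp only [Cat.atom.injEq, aC, aV] at this
      cases bb <;> simp at this <;> omega
  · rintro ⟨l, hl, hbl⟩
    obtain ⟨hj1, hj2⟩ := hvars _ hclause l hl
    refine ⟨⟨true, none, some (Cat.atom (aC (i - 1))), oneHot n m l.2 l.1⟩, ?_, ?_⟩
    · exact List.mem_append_left _ (List.mem_append_right _
        (List.mem_flatMap.mpr ⟨i - 1, List.mem_range.mpr him,
          List.mem_map.mpr ⟨l, hl, rfl⟩⟩))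
    · refine ⟨Cat.atom (aC i), Cat.atom (aC (i - 1)), L0, ?_, ?_, ?_, rfl, ?_⟩
      · intro t ht; cases ht
      · exact fun Y' hY' => Option.some.inj hY'
      · exact (hFA l hj1 hj2).2 hbl
      · exact ⟨rfl, rfl⟩
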